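/- For each fixed m ≥ 2, the formal power series F_m(y) = Σ_{n≥0} Ω_n(m) yⁿ satisfies F_m(y) · (F_{m−1}(−y) − y) = 1. -/

import Mathlib

/-- `f : [n] → {1,…,m}` is a zig-zag sequence: `f(1) ≤ f(2) ≥ f(3) ≤ f(4) ≥ ⋯`. -/
def IsZigZagSeq {n m : ℕ} (f : Fin n → Fin m) : Prop :=
  ∀ (i : ℕ) (h : i + 1 < n),
    (i % 2 = 0 → f ⟨i, Nat.lt_of_succ_lt h⟩ ≤ f ⟨i + 1, h⟩) ∧
    (i % 2 = 1 → f ⟨i + 1, h⟩ ≤ f ⟨i, Nat.lt_of_succ_lt h⟩)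

/-- The zig-zag order polynomial `Ω_n(m)`: the number of zig-zag sequences of length `n`
with entries in `{1,…,m}`. In particular `Ω_0(m) = 1` and `Ω_n(0) = 0` for `n ≥ 1`. -/
noncomputable def zzOmega (n m : ℕ) : ℕ :=
  Set.ncard {f : Fin n → Fin m | IsZigZagSeq f}

/-- The ordinary generating function `F_m(y) = Σ_{n≥0} Ω_n(m) yⁿ` in `ℚ[[y]]`. -/
noncomputable def zzF (m : ℕ) : PowerSeries ℚ :=
  PowerSeries.mk fun n => (zzOmega n m : ℚ)

attribute [local instance] Classical.propDecidable

/-- Zig-zag with a phase `ε`: for `ε` even this is `IsZigZagSeq`, for `ε` odd the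
reversed pattern. -/
def ZZAlt (ε : ℕ) {n m : ℕ} (f : Fin n → Fin m) : Prop :=
  ∀ (i : ℕ) (h : i + 1 < n),
    ((i + ε) % 2 = 0 → f ⟨i, Nat.lt_of_succ_lt h⟩ ≤ f ⟨i + 1, h⟩) ∧
    ((i + ε) % 2 = 1 → f ⟨i + 1, h⟩ ≤ f ⟨i, Nat.lt_of_succ_lt h⟩)

/-- Count of phase-`ε` zig-zag words. -/
noncomputable def zzC (ε N M : ℕ) : ℕ := Nat.card {f : Fin N → Fin M // ZZAlt ε f}

lemma zzOmega_eq_zzC (N M : ℕ) : zzOmega N M = zzC 0 N M := by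
  have h : {f : Fin N → Fin M | IsZigZagSeq f} = {f | ZZAlt 0 f} := by
    ext f
    simp only [Set.mem_setOf_eq, IsZigZagSeq, ZZAlt, Nat.add_zero]
  rw [zzOmega, h, zzC, ← Nat.card_coe_set_eq]
  rfl

lemma zzAlt_congr {ε ε' : ℕ} (hpar : ε % 2 = ε' % 2) {N M : ℕ} (f : Fin N → Fin M) :
    ZZAlt ε f ↔ ZZAlt ε' f := by
  have key : ∀ i : ℕ, (i + ε) % 2 = (i + ε') % 2 := by omega
  constructor <;> intro hf i h <;> [rw [← key i]; rw [key i]] <;> exact hf i h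

lemma zzAlt_rev {ε N M : ℕ} (f : Fin N → Fin M) (hf : ZZAlt ε f) :
    ZZAlt (ε + 1) (fun j => (f j).rev) := by
  intro i h
  obtain ⟨h1, h2⟩ := hf i h
  constructor <;> intro hpar <;> simp only [Fin.rev_le_rev]
  · exact h2 (by omega)
  · exact h1 (by omega)

lemma zzC_succ (ε N M : ℕ) : zzC (ε + 1) N M = zzC ε N M := by
  apply Nat.card_congr
  refine ⟨fun w => ⟨fun j => (w.1 j).rev, ?_⟩, fun w => ⟨fun j => (w.1 j).rev, zzAlt_rev _ w.2⟩,
    fun w => ?_, fun w => ?_⟩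
  · have := zzAlt_rev _ w.2
    have h2 : ZZAlt (ε + 1 + 1) (fun j => ((w.1 j).rev)) := this
    exact (zzAlt_congr (by omega) _).mp h2
  · ext j; simp [Fin.rev_rev]
  · ext j; simp [Fin.rev_rev]

lemma zzC_eq (ε N M : ℕ) : zzC ε N M = zzOmega N M := by
  induction ε with
  | zero => exact (zzOmega_eq_zzC N M).symm
  | succ k ih => rw [zzC_succ, ih]

lemma zzOmega_zero (M : ℕ) : zzOmega 0 M = 1 := by
  rw [zzOmega_eq_zzC, zzC]
  have : Unique {f : Fin 0 → Fin M // ZZAlt 0 f} :=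
    ⟨⟨⟨fun i => i.elim0, fun i h => by omega⟩⟩, by rintro ⟨f, hf⟩; ext j; exact j.elim0⟩
  exact Nat.card_unique

/-- the `p`-th fiber condition: first occurrence of the letter `0` is at position `p`. -/
def FirstZero {N m : ℕ} (w : Fin N → Fin (m+1)) (p : ℕ) (hp : p < N) : Prop :=
  w ⟨p, hp⟩ = 0 ∧ ∀ j : Fin N, (j : ℕ) < p → w j ≠ 0

set_option maxHeartbeats 2000000 in
/-- Splitting a zig-zag word at the first `0`, when the parity is good. -/
noncomputable def splitEquiv (ε m N p : ℕ) (hp : p < N) (hpar : (p + ε) % 2 = 0) :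
    {w : Fin N → Fin (m+1) // ZZAlt ε w ∧ FirstZero w p hp}
      ≃ {g : Fin p → Fin m // ZZAlt ε g} ×
        {h : Fin (N - (p+1)) → Fin (m+1) // ZZAlt (ε + p + 1) h} where
  toFun w :=
    (⟨fun j => (w.1 ⟨j, by omega⟩).pred (w.2.2.2 ⟨j, by omega⟩ j.2), by
        intro i hi
        obtain ⟨h1, h2⟩ := w.2.1 i (by omega)
        constructor <;> intro hx <;> rw [Fin.pred_le_pred_iff]
        · exact h1 hx
        · exact h2 hx⟩,
     ⟨fun j => w.1 ⟨p + 1 + j, by omega⟩, by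
        intro i hi
        obtain ⟨h1, h2⟩ := w.2.1 (p + 1 + i) (by omega)
        constructor <;> intro hx
        · exact h1 (by omega)
        · exact h2 (by omega)⟩)
  invFun gh :=
    ⟨fun i => if h1 : (i : ℕ) < p then ((gh.1).1 ⟨i, h1⟩).succ
       else if h2 : (i : ℕ) = p then 0
       else (gh.2).1 ⟨(i : ℕ) - (p + 1), by omega⟩, by
      refine ⟨?_, ⟨by simp, fun j hj => by simp only [dif_pos hj]; exact Fin.succ_ne_zero _⟩⟩
      intro i hi
      rcases Nat.lt_trichotomy (i + 1) p with hc | hc | hc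
      · -- both in prefix
        obtain ⟨h1, h2⟩ := (gh.1).2 i hc
        simp only [dif_pos (show i < p by omega), dif_pos hc]
        constructor <;> intro hx <;> rw [Fin.succ_le_succ_iff]
        · exact h1 hx
        · exact h2 hx
      · -- i+1 = p
        simp only [dif_pos (show i < p by omega), dif_neg (show ¬ ((i:ℕ)+1 < p) by omega),
          dif_pos hc]
        constructor <;> intro hx
        · omega
        · exact Fin.zero_le _
      · rcases Nat.lt_trichotomy i p with hd | hd | hd
        · omega
        · -- i = p
          simp only [dif_neg (show ¬ (i < p) by omega), dif_pos hd,
            dif_neg (show ¬ ((i:ℕ)+1 < p) by omega), dif_neg (show ¬ ((i:ℕ)+1 = p) by omega)]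
          constructor <;> intro hx
          · exact Fin.zero_le _
          · omega
        · -- both in suffix
          obtain ⟨h1, h2⟩ := (gh.2).2 (i - (p + 1)) (by omega)
          have ei : (⟨i - (p+1) + 1, by omega⟩ : Fin (N - (p+1))) = ⟨i + 1 - (p+1), by omega⟩ := by
            apply Fin.ext
            show i - (p+1) + 1 = i + 1 - (p+1)
            omega
          rw [ei] at h1 h2
          simp only [dif_neg (show ¬ (i < p) by omega), dif_neg (show ¬ ((i:ℕ) = p) by omega),
            dif_neg (show ¬ ((i:ℕ)+1 < p) by omega), dif_neg (show ¬ ((i:ℕ)+1 = p) by omega)]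
          constructor <;> intro hx
          · exact h1 (by omega)
          · exact h2 (by omega)⟩
  left_inv w := by
    obtain ⟨w, hw, h0, hav⟩ := w
    apply Subtype.ext
    funext j
    dsimp only
    rcases Nat.lt_trichotomy (j : ℕ) p with hc | hc | hc
    · rw [dif_pos hc]
      exact Fin.succ_pred _ _
    · rw [dif_neg (by omega), dif_pos hc]
      have e : j = ⟨p, hp⟩ := Fin.ext hc
      rw [e]
      exact h0.symm
    · rw [dif_neg (by omega), dif_neg (by omega)]
      have e : (⟨p + 1 + ((j : ℕ) - (p + 1)), by omega⟩ : Fin N) = j := by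
        apply Fin.ext
        show p + 1 + ((j : ℕ) - (p + 1)) = (j : ℕ)
        omega
      rw [e]
  right_inv gh := by
    obtain ⟨g, h⟩ := gh
    refine Prod.ext ?_ ?_
    · apply Subtype.ext
      funext j
      dsimp only
      refine Fin.succ_injective _ ?_
      rw [Fin.succ_pred, dif_pos j.2]
    · apply Subtype.ext
      funext j
      dsimp only
      rw [dif_neg (by omega), dif_neg (by omega)]
      have e : (⟨(p + 1 + (j : ℕ)) - (p + 1), by omega⟩ : Fin (N - (p+1))) = j := by
        apply Fin.ext
        show (p + 1 + (j : ℕ)) - (p + 1) = (j : ℕ)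
        omega
      rw [e]

lemma badFiber (ε m N p : ℕ) (hp : p < N) (h1 : 1 ≤ p) (hpar : (p + ε) % 2 = 1) :
    IsEmpty {w : Fin N → Fin (m+1) // ZZAlt ε w ∧ FirstZero w p hp} := by
  constructor
  rintro ⟨w, hw, h0, hav⟩
  have c := (hw (p-1) (by omega)).1 (by omega)
  have e : (⟨p - 1 + 1, by omega⟩ : Fin N) = ⟨p, hp⟩ := by
    apply Fin.ext; simp; omega
  rw [e, h0, Fin.le_zero_iff] at c
  exact hav ⟨p - 1, by omega⟩ (by simp; omega) c

/-- The exceptional fiber: `ε` odd, `p = 0`, length `≥ 2`. -/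
noncomputable def extraEquiv (ε m N : ℕ) (hN : 2 ≤ N) (hpar : ε % 2 = 1) :
    {w : Fin N → Fin (m+1) // ZZAlt ε w ∧ FirstZero w 0 (by omega)}
      ≃ {t : Fin (N - 2) → Fin (m+1) // ZZAlt ε t} where
  toFun w := ⟨fun j => w.1 ⟨j + 2, by omega⟩, by
    intro i h
    obtain ⟨h1, h2⟩ := w.2.1 (i + 2) (by omega)
    exact ⟨fun hp => h1 (by omega), fun hp => h2 (by omega)⟩⟩
  invFun t := ⟨fun i => if h : (i : ℕ) < 2 then 0 else t.1 ⟨(i : ℕ) - 2, by omega⟩, by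
    refine ⟨?_, by simp, fun j hj _ => by omega⟩
    intro i h
    rcases Nat.lt_or_ge i 2 with hi | hi
    · interval_cases i
      · -- step 0 : both entries are 0
        constructor <;> intro hp <;> simp
      · -- step 1 : left entry is 0
        have e1 : ¬ ((⟨1+1, h⟩ : Fin N) : ℕ) < 2 := by simp
        constructor <;> intro hp
        · simp only [dif_pos (by norm_num : ((⟨1, Nat.lt_of_succ_lt h⟩ : Fin N) : ℕ) < 2),
            dif_neg e1]
          exact Fin.zero_le _
        · omega
    · have e1 : ¬ ((⟨i, Nat.lt_of_succ_lt h⟩ : Fin N) : ℕ) < 2 := by simp; omega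
      have e2 : ¬ ((⟨i+1, h⟩ : Fin N) : ℕ) < 2 := by simp; omega
      simp only [dif_neg e1, dif_neg e2]
      obtain ⟨h1, h2⟩ := t.2 (i - 2) (by omega)
      have ei : (⟨(i : ℕ) - 2 + 1, by omega⟩ : Fin (N-2)) = ⟨(i : ℕ) + 1 - 2, by omega⟩ := by
        apply Fin.ext; simp; omega
      rw [ei] at h1 h2
      exact ⟨fun hp => h1 (by omega), fun hp => h2 (by omega)⟩⟩
  left_inv w := by
    obtain ⟨w, hw, h0, -⟩ := w
    have h1 : w ⟨1, by omega⟩ = 0 := by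
      have c := (hw 0 (by omega)).2 (by omega)
      rw [show (⟨0, by omega⟩ : Fin N) = ⟨0, by omega⟩ from rfl] at c
      rw [h0, Fin.le_zero_iff] at c
      exact c
    ext j
    dsimp only
    split
    · rename_i hj
      interval_cases hj' : (j : ℕ)
      · rw [show j = ⟨0, by omega⟩ from Fin.ext hj', h0]
      · rw [show j = ⟨1, by omega⟩ from Fin.ext hj', h1]
    · rename_i hj
      have e : (⟨(j : ℕ) - 2 + 2, by omega⟩ : Fin N) = j := by
        apply Fin.ext
        show (j : ℕ) - 2 + 2 = (j : ℕ)
        omega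
      rw [e]
  right_inv t := by
    ext j
    dsimp only
    rw [dif_neg (by simp)]
    congr 1

noncomputable def noZeroEquiv (ε m N : ℕ) :
    {w : Fin N → Fin (m+1) // ZZAlt ε w ∧ ∀ j, w j ≠ 0}
      ≃ {g : Fin N → Fin m // ZZAlt ε g} where
  toFun w := ⟨fun j => (w.1 j).pred (w.2.2 j), by
    intro i h
    obtain ⟨h1, h2⟩ := w.2.1 i h
    constructor <;> intro hpar <;> rw [Fin.pred_le_pred_iff]
    · exact h1 hpar
    · exact h2 hpar⟩
  invFun g := ⟨fun j => (g.1 j).succ, by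
    refine ⟨?_, fun j => Fin.succ_ne_zero _⟩
    intro i h
    obtain ⟨h1, h2⟩ := g.2 i h
    constructor <;> intro hpar <;> rw [Fin.succ_le_succ_iff]
    · exact h1 hpar
    · exact h2 hpar⟩
  left_inv w := by ext j; simp
  right_inv g := by ext j; simp

/-- classification fiber contribution -/
noncomputable def clsT (ε m N p : ℕ) : ℕ :=
  if (p + ε) % 2 = 0 then zzOmega p m * zzOmega (N - (p+1)) (m+1)
  else if p = 0 then (if N = 1 then 1 else zzOmega (N - 2) (m+1)) else 0

/-- none-fiber count -/
lemma classify_none (ε m N : ℕ) : Nat.card {w : Fin N → Fin (m+1) //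
    ZZAlt ε w ∧ Fin.find? (fun i => decide (w i = 0)) = none} = zzC ε N m := by
  classical
  rw [Nat.card_congr (Equiv.subtypeEquivRight (q := fun w => ZZAlt ε w ∧ ∀ j, w j ≠ 0)
    (fun w => by rw [Fin.find?_eq_none_iff]; simp))]
  exact Nat.card_congr (noZeroEquiv ε m N)

/-- some-fiber count -/
lemma classify_some (ε m N : ℕ) : ∀ (q : Fin N), Nat.card {w : Fin N → Fin (m+1) //
    ZZAlt ε w ∧ Fin.find? (fun i => decide (w i = 0)) = some q} = clsT ε m N (q : ℕ) := by
  classical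
  rintro ⟨p, hp⟩
  have efz : Nat.card {w : Fin N → Fin (m+1) //
      ZZAlt ε w ∧ Fin.find? (fun i => decide (w i = 0)) = some ⟨p, hp⟩}
      = Nat.card {w : Fin N → Fin (m+1) // ZZAlt ε w ∧ FirstZero w p hp} := by
    apply Nat.card_congr
    apply Equiv.subtypeEquivRight
    intro w
    rw [Fin.find?_eq_some_iff]
    unfold FirstZero
    constructor
    · rintro ⟨hA, ⟨h1, h2⟩⟩
      refine ⟨hA, of_decide_eq_true h1, fun j hj hj0 => ?_⟩
      have h3 := h2 j (Fin.lt_def.mpr hj)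
      simp [hj0] at h3
    · rintro ⟨hA, ⟨h1, h2⟩⟩
      refine ⟨hA, decide_eq_true h1, fun j hj0 => ?_⟩
      exact decide_eq_false (h2 j (Fin.lt_def.mp hj0))
  rw [efz]
  clear efz
  show _ = clsT ε m N p
  rcases Nat.even_or_odd (p + ε) with hpar | hpar
  · have hpar' : (p + ε) % 2 = 0 := Nat.even_iff.mp hpar
    rw [Nat.card_congr (splitEquiv ε m N p hp hpar'), Nat.card_prod]
    show zzC ε p m * zzC (ε + p + 1) (N - (p+1)) (m+1) = _
    rw [zzC_eq, zzC_eq, clsT, if_pos hpar']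
  · have hpar' : (p + ε) % 2 = 1 := Nat.odd_iff.mp hpar
    rcases Nat.eq_zero_or_pos p with rfl | hp1
    · have hε : ε % 2 = 1 := by omega
      rcases Nat.lt_or_ge N 2 with hN | hN
      · have hN1 : N = 1 := by omega
        subst hN1
        have hu : Unique {w : Fin 1 → Fin (m+1) // ZZAlt ε w ∧ FirstZero w 0 hp} := by
          refine ⟨⟨⟨fun _ => 0, fun i h => by omega, rfl, fun j hj => by omega⟩⟩, ?_⟩
          rintro ⟨w, hw, h0, hav⟩
          apply Subtype.ext
          funext j
          show w j = (0 : Fin (m+1))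
          have hj : j = ⟨0, hp⟩ := Fin.ext (by omega)
          rw [hj]
          exact h0
        rw [Nat.card_unique, clsT]
        rw [if_neg (by omega), if_pos rfl, if_pos rfl]
      · rw [Nat.card_congr (extraEquiv ε m N hN hε)]
        show zzC ε (N - 2) (m+1) = _
        rw [zzC_eq, clsT]
        rw [if_neg (by omega), if_pos rfl, if_neg (by omega)]
    · have hemp := badFiber ε m N p hp hp1 hpar'
      rw [Nat.card_of_isEmpty, clsT]
      rw [if_neg (by omega), if_neg (by omega)]

/-- The classification of phase-`ε` zig-zag words by the first occurrence of the letter `0`. -/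
lemma classify (ε m N : ℕ) :
    zzC ε N (m+1) = zzC ε N m + ∑ p ∈ Finset.range N, clsT ε m N p := by
  classical
  have key : zzC ε N (m+1) =
      Nat.card {w : Fin N → Fin (m+1) // ZZAlt ε w ∧ Fin.find? (fun i => decide (w i = 0)) = none}
      + ∑ p : Fin N, Nat.card {w : Fin N → Fin (m+1) //
          ZZAlt ε w ∧ Fin.find? (fun i => decide (w i = 0)) = some p} := by
    rw [zzC, Nat.card_congr (Equiv.sigmaFiberEquiv
      (fun s : {w : Fin N → Fin (m+1) // ZZAlt ε w} =>
        Fin.find? (fun i => decide (s.1 i = 0)))).symm]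
    rw [Nat.card_eq_fintype_card, Fintype.card_sigma, Fintype.sum_option]
    congr 1
    · rw [← Nat.card_eq_fintype_card]
      exact Nat.card_congr (Equiv.subtypeSubtypeEquivSubtypeInter (ZZAlt ε)
        (fun w => Fin.find? (fun i => decide (w i = 0)) = none))
    · refine Finset.sum_congr rfl fun p _ => ?_
      rw [← Nat.card_eq_fintype_card]
      exact Nat.card_congr (Equiv.subtypeSubtypeEquivSubtypeInter (ZZAlt ε)
        (fun w => Fin.find? (fun i => decide (w i = 0)) = some p))
  rw [key, classify_none]
  congr 1
  rw [Finset.sum_congr rfl fun p _ => classify_some ε m N p]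
  rw [Fin.sum_univ_eq_sum_range]

/-- The signed convolution identity, in `ℚ`. -/
lemma signed_conv (m' q : ℕ) (hq : 1 ≤ q) :
    ∑ p ∈ Finset.range (q+1),
      ((-1 : ℚ) ^ p * zzOmega p m' * zzOmega (q - p) (m'+1))
      = zzOmega (q-1) (m'+1) := by
  have h0 := classify 0 m' (q+1)
  have h1 := classify 1 m' (q+1)
  simp only [zzC_eq] at h0 h1
  have hE : ∑ p ∈ Finset.range (q+1), clsT 0 m' (q+1) p
      = ∑ p ∈ Finset.range (q+1), clsT 1 m' (q+1) p := by omega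
  clear h0 h1
  have key : ∀ p ∈ Finset.range (q+1),
      ((-1:ℚ)^p * zzOmega p m' * zzOmega (q-p) (m'+1))
      = ((clsT 0 m' (q+1) p : ℚ) - (clsT 1 m' (q+1) p : ℚ))
        + (if p = 0 then (zzOmega (q-1) (m'+1) : ℚ) else 0) := by
    intro p hp
    have hqp : (q+1) - (p+1) = q - p := by omega
    rcases Nat.even_or_odd p with hpe | hpo
    · have h2 : p % 2 = 0 := Nat.even_iff.mp hpe
      have hpow : ((-1:ℚ))^p = 1 := Even.neg_one_pow hpe
      rcases Nat.eq_zero_or_pos p with rfl | hppos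
      · rw [clsT, clsT, hqp]
        rw [if_pos (by omega), if_neg (by omega), if_pos rfl, if_neg (by omega), if_pos rfl]
        push_cast
        ring
      · rw [clsT, clsT, hqp]
        rw [if_pos (by omega), if_neg (by omega), if_neg (by omega), if_neg (by omega)]
        push_cast [hpow]
        ring
    · have h2 : p % 2 = 1 := Nat.odd_iff.mp hpo
      have hpow : ((-1:ℚ))^p = -1 := Odd.neg_one_pow hpo
      rw [clsT, clsT, hqp]
      rw [if_neg (by omega), if_neg (by omega), if_pos (by omega), if_neg (by omega)]
      push_cast [hpow]
      ring
  rw [Finset.sum_congr rfl key, Finset.sum_add_distrib, Finset.sum_sub_distrib]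
  rw [← Nat.cast_sum, ← Nat.cast_sum, hE, sub_self, zero_add]
  rw [Finset.sum_ite_eq' (Finset.range (q+1)) 0 (fun _ => (zzOmega (q-1) (m'+1) : ℚ))]
  rw [if_pos (Finset.mem_range.mpr (by omega))]

/-- for `m ≥ 2`, `F_m(y) · (F_{m-1}(-y) - y) = 1`, where `F_{m-1}(-y)` is
the substitution `y ↦ -y`, i.e. the series `Σ_{n≥0} (-1)ⁿ Ω_n(m-1) yⁿ`. -/
theorem zzF_rec_neg (m : ℕ) (hm : 2 ≤ m) :
    zzF m * ((PowerSeries.mk fun n => ((-1 : ℚ) ^ n * zzOmega n (m - 1))) -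
      PowerSeries.X) = 1 := by
  obtain ⟨m', rfl⟩ : ∃ m', m = m' + 1 := ⟨m - 1, by omega⟩
  have hmm : m' + 1 - 1 = m' := rfl
  apply PowerSeries.ext
  intro q
  rw [PowerSeries.coeff_mul, PowerSeries.coeff_one]
  have hsub : ∀ j : ℕ, (PowerSeries.coeff j)
      ((PowerSeries.mk fun n => ((-1 : ℚ) ^ n * zzOmega n (m' + 1 - 1))) - PowerSeries.X)
      = (-1:ℚ)^j * zzOmega j m' - (if j = 1 then 1 else 0) := by
    intro j
    rw [map_sub, PowerSeries.coeff_mk, PowerSeries.coeff_X, hmm]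
  have hterm : ∀ x ∈ Finset.HasAntidiagonal.antidiagonal q,
      (PowerSeries.coeff x.1) (zzF (m'+1)) * (PowerSeries.coeff x.2)
        ((PowerSeries.mk fun n => ((-1 : ℚ) ^ n * zzOmega n (m' + 1 - 1))) - PowerSeries.X)
      = (zzOmega x.1 (m'+1) : ℚ) * ((-1:ℚ)^x.2 * zzOmega x.2 m' - (if x.2 = 1 then 1 else 0)) := by
    intro x hx
    rw [hsub, zzF, PowerSeries.coeff_mk]
  rw [Finset.sum_congr rfl hterm]
  rw [Finset.Nat.sum_antidiagonal_eq_sum_range_succ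
    (fun i j => (zzOmega i (m'+1) : ℚ) * ((-1:ℚ)^j * zzOmega j m' - (if j = 1 then 1 else 0)))]
  rcases Nat.eq_zero_or_pos q with rfl | hq
  · simp [zzOmega_zero]
  · rw [if_neg (by omega)]
    have expand : ∀ k ∈ Finset.range (q+1),
        (zzOmega k (m'+1) : ℚ) * ((-1:ℚ)^(q-k) * zzOmega (q-k) m' - (if q-k = 1 then 1 else 0))
        = ((-1:ℚ)^(q-k) * zzOmega (q-k) m' * zzOmega (q-(q-k)) (m'+1))
          - (if k = q - 1 then (zzOmega k (m'+1) : ℚ) else 0) := by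
      intro k hk
      rw [Finset.mem_range] at hk
      have e1 : q - (q - k) = k := by omega
      have e2 : (q - k = 1) = (k = q - 1) := by
        apply propext; constructor <;> intro <;> omega
      rw [e1]
      simp only [e2]
      rcases eq_or_ne k (q-1) with rfl | hne
      · rw [if_pos rfl, if_pos rfl]; ring
      · rw [if_neg hne, if_neg hne]; ring
    rw [Finset.sum_congr rfl expand, Finset.sum_sub_distrib]
    have refl1 : ∑ k ∈ Finset.range (q+1),
        ((-1:ℚ)^(q-k) * zzOmega (q-k) m' * zzOmega (q-(q-k)) (m'+1))
        = ∑ p ∈ Finset.range (q+1), ((-1:ℚ)^p * zzOmega p m' * zzOmega (q-p) (m'+1)) := by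
      have := Finset.sum_range_reflect
        (fun p => ((-1:ℚ)^p * zzOmega p m' * zzOmega (q-p) (m'+1))) (q+1)
      simpa using this
    rw [refl1, signed_conv m' q hq]
    rw [Finset.sum_ite_eq' (Finset.range (q+1)) (q-1)
      (fun k => (zzOmega k (m'+1) : ℚ))]
    rw [if_pos (Finset.mem_range.mpr (by omega))]
    ring
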